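/- Let k be a field of characteristic p > 0 with p ≥ n, and let X be an n × n strictly upper triangular matrix over k. Then log(exp(X)) = X, where exp(X) = Σ_{k=0}^{n-1} X^k/k! and log(1+Y) = Σ_{k=1}^{n-1} (-1)^{k-1} Y^k / k. -/

import Mathlib

open Polynomial Finset

section
variable {K : Type*} [Field K] {n : ℕ}

lemma stmt2_coeff_cancel {g e : K[X]} (he : e.coeff 0 = 1) {m : ℕ}
    (h : ∀ j < m, (g * e).coeff j = 0) : ∀ j < m, g.coeff j = 0 := by
  intro j
  induction j using Nat.strong_induction_on with
  | _ j ih =>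
    intro hj
    have h1 := h j hj
    rw [coeff_mul, Finset.Nat.sum_antidiagonal_eq_sum_range_succ_mk,
      Finset.sum_range_succ] at h1
    have h2 : ∑ k ∈ Finset.range j, g.coeff k * e.coeff (j - k) = 0 :=
      Finset.sum_eq_zero fun k hk => by
        rw [ih k (Finset.mem_range.mp hk) (lt_trans (Finset.mem_range.mp hk) hj), zero_mul]
    rw [h2, zero_add] at h1
    simpa [he] using h1

lemma stmt2_der_E (hne : ∀ m : ℕ, 0 < m → m < n → (m : K) ≠ 0) (hn : 1 ≤ n) :
    derivative (∑ m ∈ range n, C ((m.factorial : K))⁻¹ * X ^ m)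
      = ∑ m ∈ range (n - 1), C ((m.factorial : K))⁻¹ * X ^ m := by
  obtain ⟨N, rfl⟩ : ∃ N, n = N + 1 := ⟨n - 1, by omega⟩
  rw [map_sum]
  simp only [derivative_C_mul_X_pow]
  rw [Finset.sum_range_succ']
  simp only [Nat.cast_zero, mul_zero, map_zero, zero_mul, add_zero, Nat.add_sub_cancel]
  refine Finset.sum_congr rfl fun i hi => ?_
  have hi' : (i : ℕ) < N := Finset.mem_range.mp hi
  have h1 : ((i + 1 : ℕ) : K) ≠ 0 := hne (i + 1) (by omega) (by omega)
  congr 1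
  rw [Nat.factorial_succ, Nat.cast_mul, mul_inv, Nat.cast_add, Nat.cast_one]
  have h1' : ((i : K) + 1) ≠ 0 := by exact_mod_cast h1
  rw [mul_comm ((i:K) + 1)⁻¹, mul_assoc, inv_mul_cancel₀ h1', mul_one]

lemma stmt2_der_L (hne : ∀ m : ℕ, 0 < m → m < n → (m : K) ≠ 0) :
    derivative (∑ k ∈ Icc 1 (n - 1), C ((-1 : K) ^ (k - 1) / (k : K)) * X ^ k)
      = ∑ j ∈ range (n - 1), (-X : K[X]) ^ j := by
  rw [map_sum]
  simp only [derivative_C_mul_X_pow]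
  rw [show ∑ j ∈ range (n - 1), (-X : K[X]) ^ j
      = ∑ k ∈ Icc 1 (n - 1), (-X : K[X]) ^ (k - 1) by
    rw [show Icc 1 (n-1) = Ico 1 (n-1+1) by rw [Finset.Ico_add_one_right_eq_Icc], Finset.sum_Ico_eq_sum_range]
    simp]
  refine Finset.sum_congr rfl fun k hk => ?_
  obtain ⟨hk1, hk2⟩ := Finset.mem_Icc.mp hk
  have hkne : (k : K) ≠ 0 := hne k hk1 (by omega)
  rw [div_mul_cancel₀ _ hkne, neg_pow]
  simp [map_pow]
  ring

lemma stmt2_geo (m : ℕ) :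
    (1 + X) * (∑ j ∈ range m, (-X : K[X]) ^ j) = 1 - (-X : K[X]) ^ m := by
  linear_combination (-1 : K[X]) * geom_sum_mul (-X : K[X]) m

lemma stmt2_key (hne : ∀ m : ℕ, 0 < m → m < n → (m : K) ≠ 0) (hn : 1 ≤ n) :
    ∀ j < n,
      ((∑ k ∈ Icc 1 (n - 1), C ((-1 : K) ^ (k - 1) / (k : K)) * X ^ k).comp
        ((∑ m ∈ range n, C ((m.factorial : K))⁻¹ * X ^ m) - 1) - X).coeff j = 0 := by
  set E : K[X] := ∑ m ∈ range n, C ((m.factorial : K))⁻¹ * X ^ m with hEdef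
  set L : K[X] := ∑ k ∈ Icc 1 (n - 1), C ((-1 : K) ^ (k - 1) / (k : K)) * X ^ k with hLdef
  have hE0 : E.coeff 0 = 1 := by
    rw [hEdef, finset_sum_coeff]
    rw [Finset.sum_eq_single 0]
    · simp
    · intro m _ hm
      simp [coeff_X_pow, hm, Ne.symm hm]
    · intro h; exact absurd (Finset.mem_range.mpr (by omega)) h
  have hL0 : L.coeff 0 = 0 := by
    rw [hLdef, finset_sum_coeff]
    refine Finset.sum_eq_zero fun k hk => ?_
    have hk1 : 1 ≤ k := (Finset.mem_Icc.mp hk).1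
    simp [coeff_X_pow, Nat.ne_of_lt (by omega : (0:ℕ) < k), (by omega : 0 ≠ k)]
  -- G : composed derivative of L
  set G : K[X] := (derivative L).comp (E - 1) with hGdef
  have hG : E * G = 1 - (1 - E) ^ (n - 1) := by
    have h := congrArg (fun q : K[X] => q.comp (E - 1)) (stmt2_geo (K := K) (n - 1))
    simp only [add_comp, one_comp, mul_comp, X_comp, sub_comp, pow_comp, neg_comp] at h
    rw [hGdef, stmt2_der_L hne]
    have e1 : (1 : K[X]) + (E - 1) = E := by ring
    have e2 : (-(E - 1) : K[X]) = 1 - E := by ring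
    rw [e1, e2] at h
    exact h
  have hdF : derivative (L.comp (E - 1) - X) = derivative E * G - 1 := by
    rw [derivative_sub, derivative_X, derivative_comp, derivative_sub, derivative_one,
      sub_zero, ← hGdef]
  have hdE : derivative E = E - C (((n-1).factorial : K))⁻¹ * X ^ (n-1) := by
    rw [stmt2_der_E hne hn]
    have hE' : E = (∑ m ∈ range (n-1), C ((m.factorial : K))⁻¹ * X ^ m)
        + C (((n-1).factorial : K))⁻¹ * X ^ (n-1) := by
      rw [hEdef, show n = (n-1) + 1 by omega, Finset.sum_range_succ]
      simp
    rw [hE']; ring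
  have hder : derivative (L.comp (E - 1) - X) * E
      = -(C (((n-1).factorial : K))⁻¹ * X ^ (n-1) + (1 - E) ^ (n-1) * derivative E) := by
    linear_combination E * hdF + derivative E * hG + hdE
  have hdvd : ∀ j, j < n - 1 → (derivative (L.comp (E - 1) - X) * E).coeff j = 0 := by
    obtain ⟨r, hr⟩ : (X : K[X]) ^ (n-1) ∣ (1 - E) ^ (n-1) * derivative E :=
      Dvd.dvd.mul_right (pow_dvd_pow_of_dvd (X_dvd_iff.mpr (by simp [hE0])) (n-1)) _
    intro j hj
    rw [hder, hr, coeff_neg, coeff_add, coeff_C_mul, coeff_X_pow, if_neg (by omega),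
      mul_zero, mul_comm ((X : K[X]) ^ (n-1)) r, coeff_mul_X_pow', if_neg (by omega)]
    simp
  have hderc := stmt2_coeff_cancel hE0 hdvd
  intro j hj
  match j with
  | 0 =>
    rw [coeff_sub, coeff_X_zero, sub_zero, coeff_zero_eq_eval_zero, eval_comp, eval_sub,
      eval_one, show eval 0 E = 1 from (coeff_zero_eq_eval_zero E) ▸ hE0, sub_self,
      ← coeff_zero_eq_eval_zero, hL0]
  | Nat.succ j =>
    have h1 : (derivative (L.comp (E - 1) - X)).coeff j = 0 := hderc j (by omega)
    rw [coeff_derivative] at h1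
    have h2 : ((j : K) + 1) ≠ 0 := by
      have := hne (j + 1) (by omega) (by omega)
      exact_mod_cast this
    simpa using (mul_eq_zero.mp h1).resolve_right h2
end

lemma stmt2_triu_pow_zero {K : Type*} [Field K] {n : ℕ} (X : Matrix (Fin n) (Fin n) K)
    (hX : ∀ i j : Fin n, j ≤ i → X i j = 0) : X ^ n = 0 := by
  have key : ∀ m (i j : Fin n), (j : ℕ) < m + (i : ℕ) → (X ^ m) i j = 0 := by
    intro m
    induction m with
    | zero =>
      intro i j hij
      simp only [pow_zero]
      exact Matrix.one_apply_ne' (by intro h; rw [h] at hij; omega)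
    | succ m ih =>
      intro i j hij
      rw [pow_succ', Matrix.mul_apply]
      refine Finset.sum_eq_zero fun l _ => ?_
      rcases le_or_gt l i with h | h
      · rw [hX i l h, zero_mul]
      · rw [ih l j (by omega), mul_zero]
  ext i j
  simpa using key n i j (by omega)

lemma stmt2_aeval_sum_CX {K : Type*} [Field K] {A : Type*} [Ring A] [Algebra K A] (M : A)
    (s : Finset ℕ) (a : ℕ → K) :
    Polynomial.aeval M (∑ k ∈ s, Polynomial.C (a k) * Polynomial.X ^ k)
      = ∑ k ∈ s, a k • M ^ k := by
  rw [map_sum]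
  exact Finset.sum_congr rfl fun k _ => by
    rw [map_mul, Polynomial.aeval_C, map_pow, Polynomial.aeval_X, ← Algebra.smul_def]

lemma stmt2_aeval_eq_zero {K : Type*} [Field K] {A : Type*} [Ring A] [Algebra K A] (M : A)
    {g : Polynomial K} {n : ℕ} (hc : ∀ j < n, g.coeff j = 0) (hM : M ^ n = 0) :
    Polynomial.aeval M g = 0 := by
  rw [Polynomial.aeval_eq_sum_range' (n := g.natDegree + 1 + n) (by omega) M]
  refine Finset.sum_eq_zero fun i hi => ?_
  rcases lt_or_ge i n with h | h
  · rw [hc i h, zero_smul]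
  · rw [pow_eq_zero_of_le h hM, smul_zero]

/-- Let k be a field of characteristic p ≥ n and X an n × n strictly upper triangular
matrix.  Then log(exp X) = X, where exp(X) = Σ_{k<n} X^k/k! and
log(1+Y) = Σ_{k=1}^{n-1} (-1)^{k-1} Y^k / k. -/
theorem stmt_2 {K : Type*} [Field K] (p : ℕ) [Fact p.Prime] [CharP K p]
    (n : ℕ) (hn : n ≤ p)
    (X : Matrix (Fin n) (Fin n) K)
    (hX : ∀ i j : Fin n, j ≤ i → X i j = 0) :
    ∑ k ∈ Finset.Icc 1 (n - 1), ((-1 : K) ^ (k - 1) / (k : K)) •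
        ((∑ m ∈ Finset.range n, ((m.factorial : K))⁻¹ • X ^ m) - 1) ^ k = X := by
  rcases Nat.eq_zero_or_pos n with h0 | h1
  · subst h0
    exact Subsingleton.elim _ _
  have hne : ∀ m : ℕ, 0 < m → m < n → (m : K) ≠ 0 := by
    intro m hm hmn h
    have hp : p ∣ m := (CharP.cast_eq_zero_iff K p m).mp h
    have := Nat.le_of_dvd hm hp
    omega
  have hnil : X ^ n = 0 := stmt2_triu_pow_zero X hX
  have hkey := stmt2_key hne h1 (K := K)
  have h0 : Polynomial.aeval X
      ((∑ k ∈ Finset.Icc 1 (n - 1),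
          Polynomial.C ((-1 : K) ^ (k - 1) / (k : K)) * Polynomial.X ^ k).comp
        ((∑ m ∈ Finset.range n, Polynomial.C ((m.factorial : K))⁻¹ * Polynomial.X ^ m) - 1)
        - Polynomial.X) = 0 :=
    stmt2_aeval_eq_zero X hkey hnil
  rw [map_sub, Polynomial.aeval_X, sub_eq_zero, Polynomial.aeval_comp, map_sub, map_one,
    stmt2_aeval_sum_CX, stmt2_aeval_sum_CX] at h0
  exact h0
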